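/- The space Prp(A) of proper ideals of a commutative ring A with identity, endowed with the subspace topology inherited from the coarse lower topology on Idl(A), is a spectral space: it is quasi-compact, sober, and it has a basis of quasi-compact open sets that is closed under finite intersections. -/

import Mathlib

open TopologicalSpace

/-- `v(I)`: the set of all ideals containing `I`. -/
def vSet {A : Type*} [CommRing A] (I : Ideal A) : Set (Ideal A) := {S : Ideal A | I ≤ S}

/-- The coarse lower topology on the set `Idl(A)` of all ideals of `A`: the topology with
closed subbase `{v(I) : I ∈ Idl(A)}`, i.e. generated by the open sets `v(I)ᶜ`. -/
instance coarseLower (A : Type*) [CommRing A] : TopologicalSpace (Ideal A) :=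
  generateFrom {U : Set (Ideal A) | ∃ I : Ideal A, U = (vSet I)ᶜ}

/-- `Prp(A)`: the proper ideals of `A`, with the subspace topology from `Idl(A)`. -/
abbrev Prp (A : Type*) [CommRing A] : Type _ := {I : Ideal A // I ≠ ⊤}

namespace PrpAux

variable {A : Type*} [CommRing A]

/-- Subbasic open sets of `Prp A`. -/
def Dset (a : A) : Set (Prp A) := {I : Prp A | a ∉ I.1}

lemma compl_dset (a : A) : (Dset (A := A) a)ᶜ = {I : Prp A | a ∈ I.1} := by
  ext I; simp [Dset]

lemma topology_eq :
    (instTopologicalSpaceSubtype : TopologicalSpace (Prp A)) =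
      generateFrom (Set.range (Dset (A := A))) := by
  have h1 : (instTopologicalSpaceSubtype : TopologicalSpace (Prp A)) =
      generateFrom ((Set.preimage (Subtype.val : Prp A → Ideal A)) ''
        {U : Set (Ideal A) | ∃ I : Ideal A, U = (vSet I)ᶜ}) := by
    change TopologicalSpace.induced _ (coarseLower A) = _
    rw [show coarseLower A = generateFrom {U : Set (Ideal A) | ∃ I : Ideal A, U = (vSet I)ᶜ}
        from rfl, induced_generateFrom_eq]
  rw [h1]
  apply le_antisymm
  · apply le_generateFrom
    rintro U ⟨a, rfl⟩
    apply isOpen_generateFrom_of_mem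
    refine ⟨(vSet (Ideal.span {a}))ᶜ, ⟨Ideal.span {a}, rfl⟩, ?_⟩
    ext J
    simp [Dset, vSet, Ideal.span_singleton_le_iff_mem]
  · apply le_generateFrom
    rintro U ⟨V, hV, rfl⟩
    obtain ⟨I, rfl⟩ := hV
    have : (Subtype.val : Prp A → Ideal A) ⁻¹' (vSet I)ᶜ = ⋃ a ∈ (I : Set A), Dset a := by
      ext J
      simp only [Set.mem_preimage, Set.mem_compl_iff, vSet, Set.mem_setOf_eq, Set.mem_iUnion,
        Dset, SetLike.mem_coe]
      constructor
      · intro h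
        by_contra hc
        push_neg at hc
        exact h fun a ha => hc a ha
      · rintro ⟨a, ha, hna⟩ hle
        exact hna (hle ha)
    rw [this, ← Set.sUnion_image]
    exact TopologicalSpace.GenerateOpen.sUnion _
      (by rintro t ⟨a, ha, rfl⟩; exact TopologicalSpace.GenerateOpen.basic _ ⟨a, rfl⟩)

lemma isOpen_dset (a : A) : IsOpen (Dset a) := by
  rw [topology_eq]; exact isOpen_generateFrom_of_mem ⟨a, rfl⟩

/-- Open sets in `Prp A` are lower sets. -/
lemma isOpen_lower {U : Set (Prp A)} (hU : IsOpen U) :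
    ∀ {I J : Prp A}, I.1 ≤ J.1 → J ∈ U → I ∈ U := by
  rw [topology_eq] at hU
  induction hU with
  | basic V hV =>
    obtain ⟨a, rfl⟩ := hV
    intro I J hle hJ ha
    exact hJ (hle ha)
  | univ => intro I J _ _; trivial
  | inter V W _ _ ihV ihW =>
    intro I J hle hJ
    exact ⟨ihV hle hJ.1, ihW hle hJ.2⟩
  | sUnion S _ ih =>
    rintro I J hle ⟨V, hV, hJ⟩
    exact ⟨V, hV, ih V hV hle hJ⟩

/-- The limit ideal of an ultrafilter on `Prp A`. -/
def limitIdeal (f : Ultrafilter (Prp A)) : Ideal A where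
  carrier := {a : A | {I : Prp A | a ∈ I.1} ∈ f}
  zero_mem' := by
    simp only [Set.mem_setOf_eq]
    exact Filter.univ_mem' fun I => (I.1).zero_mem
  add_mem' := by
    intro a b ha hb
    simp only [Set.mem_setOf_eq] at *
    filter_upwards [ha, hb] with I hIa hIb
    exact (I.1).add_mem hIa hIb
  smul_mem' := by
    intro c a ha
    simp only [Set.mem_setOf_eq] at *
    filter_upwards [ha] with I hIa
    exact (I.1).smul_mem c hIa

lemma mem_limitIdeal_iff (f : Ultrafilter (Prp A)) (a : A) :
    a ∈ limitIdeal f ↔ {I : Prp A | a ∈ I.1} ∈ f := Iff.rfl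

lemma limitIdeal_ne_top (f : Ultrafilter (Prp A)) : limitIdeal f ≠ ⊤ := by
  intro h
  have h1 : (1 : A) ∈ limitIdeal f := h ▸ Submodule.mem_top
  rw [mem_limitIdeal_iff] at h1
  have : {I : Prp A | (1 : A) ∈ I.1} = ∅ := by
    ext I
    simp only [Set.mem_setOf_eq, Set.mem_empty_iff_false, iff_false]
    exact fun hm => I.2 ((Ideal.eq_top_iff_one _).mpr hm)
  exact f.toFilter.empty_notMem (this ▸ h1)

/-- The limit point of an ultrafilter on `Prp A`. -/
def limitPt (f : Ultrafilter (Prp A)) : Prp A := ⟨limitIdeal f, limitIdeal_ne_top f⟩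

lemma mem_dset_limit_iff (f : Ultrafilter (Prp A)) (a : A) :
    limitPt f ∈ Dset a ↔ Dset a ∈ f := by
  have h : limitPt f ∈ Dset a ↔ (Dset (A := A) a)ᶜ ∉ f := by
    rw [compl_dset]
    exact Iff.rfl
  rw [h, ← Ultrafilter.compl_mem_iff_notMem, compl_compl]

lemma ultrafilter_le_nhds_limit (f : Ultrafilter (Prp A)) : ↑f ≤ nhds (limitPt f) := by
  have h : nhds (limitPt f) =
      @nhds _ (generateFrom (Set.range (Dset (A := A)))) (limitPt f) := by
    rw [← topology_eq]
  rw [h, nhds_generateFrom]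
  refine le_iInf₂ fun s hs => ?_
  obtain ⟨hmem, a, rfl⟩ := hs
  exact Filter.le_principal_iff.mpr ((mem_dset_limit_iff f a).mp hmem)

lemma isCompact_basic {g : Set (Set (Prp A))} (hfin : g.Finite)
    (hsub : g ⊆ Set.range (Dset (A := A))) : IsCompact (⋂₀ g) := by
  rw [isCompact_iff_ultrafilter_le_nhds]
  intro f hf
  refine ⟨limitPt f, ?_, ultrafilter_le_nhds_limit f⟩
  intro t ht
  obtain ⟨a, rfl⟩ := hsub ht
  rw [mem_dset_limit_iff]
  exact f.toFilter.mem_of_superset (Filter.le_principal_iff.mp hf)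
    (Set.sInter_subset_of_mem ht)

end PrpAux

/-- The proper space `Prp(A)` is spectral: quasi-compact, sober (T₀ and quasi-sober), and it
has a basis of quasi-compact open sets that is closed under finite intersections. -/
theorem prp_isSpectral (A : Type*) [CommRing A] :
    CompactSpace (Prp A) ∧ T0Space (Prp A) ∧ QuasiSober (Prp A) ∧
      ∃ B : Set (Set (Prp A)), IsTopologicalBasis B ∧
        (∀ U ∈ B, IsOpen U ∧ IsCompact U) ∧
        (∀ U ∈ B, ∀ V ∈ B, U ∩ V ∈ B) := by
  classical
  set sb : Set (Set (Prp A)) := Set.range (PrpAux.Dset (A := A)) with hsb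
  have htop := PrpAux.topology_eq (A := A)
  -- the basis
  have hbasis := isTopologicalBasis_of_subbasis htop
  refine ⟨?_, ?_, ?_, ?_⟩
  · -- compactness
    refine ⟨?_⟩
    have : (Set.univ : Set (Prp A)) = ⋂₀ (∅ : Set (Set (Prp A))) := by
      rw [Set.sInter_empty]
    rw [this]
    exact PrpAux.isCompact_basic Set.finite_empty (Set.empty_subset _)
  · -- T0
    refine t0Space_iff_inseparable (Prp A) |>.mpr fun I J h => ?_
    have hall : ∀ a : A, a ∈ I.1 ↔ a ∈ J.1 := by
      intro a
      have := (inseparable_iff_forall_isOpen.mp h) (PrpAux.Dset a) (PrpAux.isOpen_dset a)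
      simp only [PrpAux.Dset, Set.mem_setOf_eq] at this
      tauto
    exact Subtype.ext (Ideal.ext hall)
  · -- quasi-sober
    refine ⟨fun {C} hirr hclosed => ?_⟩
    obtain ⟨I₀, hI₀⟩ := hirr.nonempty
    have hSle : ∀ J ∈ C, sInf (Subtype.val '' C) ≤ J.1 := fun J hJ => sInf_le ⟨J, hJ, rfl⟩
    have hSproper : sInf (Subtype.val '' C) ≠ ⊤ := by
      intro h
      have h2 := hSle I₀ hI₀
      rw [h] at h2
      exact I₀.2 (top_le_iff.mp h2)
    set L : Prp A := ⟨sInf (Subtype.val '' C), hSproper⟩ with hL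
    -- L belongs to C
    have hLC : L ∈ C := by
      rw [← hclosed.closure_eq]
      rw [hbasis.mem_closure_iff]
      rintro U ⟨g, ⟨hgfin, hgsub⟩, rfl⟩ hLU
      -- C meets every element of g
      have hmeets : ∀ t ∈ g, (C ∩ t).Nonempty := by
        intro t ht
        obtain ⟨a, rfl⟩ := hgsub ht
        have haS : a ∉ sInf (Subtype.val '' C) := hLU _ ht
        rw [Ideal.mem_sInf] at haS
        push_neg at haS
        obtain ⟨J', ⟨J, hJC, rfl⟩, haJ⟩ := haS
        exact ⟨J, hJC, haJ⟩
      -- irreducibility gives intersection with the whole finite intersection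
      have key : ∀ g' : Set (Set (Prp A)), g'.Finite → g' ⊆ sb →
          (∀ t ∈ g', (C ∩ t).Nonempty) → (C ∩ Set.sInter g').Nonempty := by
        intro g' hg'fin
        refine Set.Finite.induction_on (motive := fun g' _ => g' ⊆ sb →
            (∀ t ∈ g', (C ∩ t).Nonempty) → (C ∩ Set.sInter g').Nonempty) g' hg'fin ?_ ?_
        · intro _ _
          simpa using hirr.nonempty
        · intro t g'' htg hg''fin ih hsub hmeets
          show (C ∩ Set.sInter (insert t g'')).Nonempty
          rw [Set.sInter_insert]
          have hopen_t : IsOpen t := by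
            obtain ⟨a, rfl⟩ := hsub (Set.mem_insert t g'')
            exact PrpAux.isOpen_dset a
          have hopen_rest : IsOpen (⋂₀ g'') :=
            Set.Finite.isOpen_sInter hg''fin fun u hu => by
              obtain ⟨a, rfl⟩ := hsub (Set.mem_insert_of_mem t hu)
              exact PrpAux.isOpen_dset a
          have h1 : (C ∩ t).Nonempty := hmeets t (Set.mem_insert t g'')
          have h2 : (C ∩ ⋂₀ g'').Nonempty :=
            ih (fun u hu => hsub (Set.mem_insert_of_mem t hu))
              (fun u hu => hmeets u (Set.mem_insert_of_mem t hu))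
          have := hirr.2 t (⋂₀ g'') hopen_t hopen_rest h1 h2
          obtain ⟨x, hxC, hxt, hxr⟩ := this
          exact ⟨x, hxC, hxt, hxr⟩
      obtain ⟨x, hxC, hx⟩ := key g hgfin hgsub hmeets
      exact ⟨x, hx, hxC⟩
    -- L is a generic point
    refine ⟨L, ?_⟩
    apply le_antisymm
    · exact closure_minimal (Set.singleton_subset_iff.mpr hLC) hclosed
    · intro J hJ
      rw [mem_closure_iff]
      intro U hU hJU
      exact ⟨L, PrpAux.isOpen_lower hU (hSle J hJ) hJU, rfl⟩
  · -- the basis of compact opens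
    refine ⟨_, hbasis, ?_, ?_⟩
    · rintro U ⟨g, ⟨hgfin, hgsub⟩, rfl⟩
      exact ⟨hbasis.isOpen ⟨g, ⟨hgfin, hgsub⟩, rfl⟩, PrpAux.isCompact_basic hgfin hgsub⟩
    · rintro U ⟨g, ⟨hgfin, hgsub⟩, rfl⟩ V ⟨g', ⟨hg'fin, hg'sub⟩, rfl⟩
      exact ⟨g ∪ g', ⟨hgfin.union hg'fin, Set.union_subset hgsub hg'sub⟩,
        Set.sInter_union g g'⟩
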